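/- Let A, B and T be finite subsets of an abelian group G with |A| ≥ |B| ≥ k ≥ 1 and |A| ≥ |T|. If r_{A,−B}(x) ≤ k for all x ∈ G \ T, then ∑_{g ∈ G} r_{A,B}(g)·(r_{A,B}(g) − 1) ≤ |T||B|(|B| − k) + (k−1)|A||B|. -/

import Mathlib

open scoped Pointwise

/-- `rep A B g` is the number of representations of `g` as `a + b` with `a ∈ A`, `b ∈ B`. -/
def rep {G : Type*} [AddCommGroup G] [DecidableEq G] (A B : Finset G) (g : G) : ℕ :=
  ((A ×ˢ B).filter (fun p => p.1 + p.2 = g)).card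

section aux

variable {G : Type*} [AddCommGroup G] [DecidableEq G]

lemma rep_eq_zero_of_not_mem (A B : Finset G) {g : G} (hg : g ∉ A + B) : rep A B g = 0 := by
  rw [rep, Finset.card_eq_zero, Finset.filter_eq_empty_iff]
  rintro ⟨a, b⟩ hp hab
  simp only [Finset.mem_product] at hp
  exact hg (hab ▸ Finset.add_mem_add hp.1 hp.2)

lemma rep_le_card (A B : Finset G) (g : G) : rep A B g ≤ B.card := by
  apply Finset.card_le_card_of_injOn (fun p => p.2)
  · rintro ⟨a, b⟩ hp
    simp only [Finset.mem_coe, Finset.mem_filter, Finset.mem_product] at hp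
    exact hp.1.2
  · rintro ⟨a, b⟩ ha ⟨a', b'⟩ hb h
    simp only [Finset.mem_coe, Finset.mem_filter, Finset.mem_product] at ha hb
    simp only at h
    subst h
    have : a = a' := add_right_cancel (ha.2.trans hb.2.symm)
    simp [this]

lemma sum_rep (A B : Finset G) : ∑ g ∈ A + B, rep A B g = A.card * B.card := by
  rw [← Finset.card_product]
  exact (Finset.card_eq_sum_card_fiberwise (fun p hp => by
    simp only [Finset.mem_coe, Finset.mem_product] at hp
    exact Finset.add_mem_add hp.1 hp.2)).symm

lemma sum_rep_sq (A B : Finset G) :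
    ∑ g ∈ A + B, rep A B g * rep A B g = Finset.addEnergy A B := by
  rw [Finset.addEnergy_eq_sum_sq']
  exact Finset.sum_congr rfl fun g _ => by rw [sq]; rfl

lemma addEnergy_neg (A B : Finset G) :
    Finset.addEnergy A B = Finset.addEnergy A (-B) := by
  unfold Finset.addEnergy
  refine Finset.card_nbij' (fun x => ((x.1.1, x.1.2), (-x.2.2, -x.2.1)))
    (fun x => ((x.1.1, x.1.2), (-x.2.2, -x.2.1))) ?_ ?_ ?_ ?_
  · rintro ⟨⟨a₁, a₂⟩, b₁, b₂⟩ hx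
    simp only [Finset.mem_coe, Finset.mem_filter, Finset.mem_product, Finset.mem_neg'] at hx ⊢
    refine ⟨⟨hx.1.1, by simpa using hx.1.2.2, by simpa using hx.1.2.1⟩, ?_⟩
    rw [← sub_eq_add_neg, ← sub_eq_add_neg, sub_eq_sub_iff_add_eq_add]
    exact hx.2
  · rintro ⟨⟨a₁, a₂⟩, b₁, b₂⟩ hx
    simp only [Finset.mem_coe, Finset.mem_filter, Finset.mem_product, Finset.mem_neg'] at hx ⊢
    refine ⟨⟨hx.1.1, hx.1.2.2, hx.1.2.1⟩, ?_⟩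
    rw [← sub_eq_add_neg, ← sub_eq_add_neg, sub_eq_sub_iff_add_eq_add]
    exact hx.2
  · rintro ⟨⟨a₁, a₂⟩, b₁, b₂⟩ _; simp
  · rintro ⟨⟨a₁, a₂⟩, b₁, b₂⟩ _; simp

end aux

theorem energy_upper_bound {G : Type*} [AddCommGroup G] [DecidableEq G]
    (A B T : Finset G) (k : ℕ) (hk : 1 ≤ k) (hBk : k ≤ B.card)
    (hAB : B.card ≤ A.card) (hAT : T.card ≤ A.card)
    (hrep : ∀ x : G, x ∉ T → rep A (-B) x ≤ k) :
    ∑ᶠ g : G, rep A B g * (rep A B g - 1) ≤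
      T.card * B.card * (B.card - k) + (k - 1) * A.card * B.card := by
  classical
  have hsupp : (Function.support fun g => rep A B g * (rep A B g - 1)) ⊆ ↑(A + B) := by
    intro g hg
    by_contra hng
    have h0 : rep A B g = 0 :=
      rep_eq_zero_of_not_mem A B (fun h => hng (Finset.mem_coe.mpr h))
    exact hg (by simp [h0])
  rw [finsum_eq_finset_sum_of_support_subset _ hsupp]
  have hterm : ∀ n : ℕ, n * (n - 1) = n * n - n := by
    intro n
    cases n with
    | zero => rfl
    | succ m => rw [Nat.succ_sub_one, Nat.mul_succ, Nat.add_sub_cancel]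
  simp_rw [hterm]
  have hle : ∀ n : ℕ, n ≤ n * n := by
    intro n
    cases n with
    | zero => simp
    | succ m => exact Nat.le_mul_of_pos_left _ (Nat.succ_pos m)
  rw [Finset.sum_tsub_distrib _ (fun g _ => hle _)]
  rw [sum_rep A B, sum_rep_sq A B, addEnergy_neg A B, ← sum_rep_sq A (-B)]
  obtain ⟨m, rfl⟩ : ∃ m, k = m + 1 := ⟨k - 1, by omega⟩
  obtain ⟨d, hd⟩ : ∃ d, B.card = (m + 1) + d := ⟨B.card - (m + 1), by omega⟩
  set s := A + (-B) with hs
  set S1 : ℕ := ∑ x ∈ s.filter (· ∈ T), rep A (-B) x with hS1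
  set S2 : ℕ := ∑ x ∈ s.filter (¬ · ∈ T), rep A (-B) x with hS2
  have hr'le : ∀ x, rep A (-B) x ≤ B.card := fun x => by
    simpa using rep_le_card A (-B) x
  have hsplit : ∑ x ∈ s, rep A (-B) x * rep A (-B) x
      = ∑ x ∈ s.filter (· ∈ T), rep A (-B) x * rep A (-B) x
        + ∑ x ∈ s.filter (¬ · ∈ T), rep A (-B) x * rep A (-B) x :=
    (Finset.sum_filter_add_sum_filter_not s _ _).symm
  have h3 : S1 + S2 = A.card * B.card := by
    rw [hS1, hS2, Finset.sum_filter_add_sum_filter_not s _ _, hs, sum_rep A (-B)]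
    simp
  have h4 : S1 ≤ T.card * B.card := by
    calc S1 ≤ ∑ _x ∈ s.filter (· ∈ T), B.card := Finset.sum_le_sum fun x _ => hr'le x
    _ = (s.filter (· ∈ T)).card * B.card := by rw [Finset.sum_const, smul_eq_mul]
    _ ≤ T.card * B.card := by
        apply Nat.mul_le_mul_right
        apply Finset.card_le_card
        intro x hx
        exact (Finset.mem_filter.mp hx).2
  have h1 : ∑ x ∈ s.filter (· ∈ T), rep A (-B) x * rep A (-B) x ≤ B.card * S1 := by
    rw [hS1, Finset.mul_sum]
    exact Finset.sum_le_sum fun x _ => Nat.mul_le_mul_right _ (hr'le x)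
  have h2 : ∑ x ∈ s.filter (¬ · ∈ T), rep A (-B) x * rep A (-B) x ≤ (m + 1) * S2 := by
    rw [hS2, Finset.mul_sum]
    refine Finset.sum_le_sum fun x hx => Nat.mul_le_mul_right _ ?_
    exact hrep x (Finset.mem_filter.mp hx).2
  have hE : ∑ x ∈ s, rep A (-B) x * rep A (-B) x
      ≤ (m + 1) * (A.card * B.card) + d * (T.card * B.card) := by
    calc ∑ x ∈ s, rep A (-B) x * rep A (-B) x ≤ B.card * S1 + (m + 1) * S2 := by
          rw [hsplit]; exact Nat.add_le_add h1 h2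
    _ = (m + 1) * (S1 + S2) + d * S1 := by rw [hd]; ring
    _ = (m + 1) * (A.card * B.card) + d * S1 := by rw [h3]
    _ ≤ (m + 1) * (A.card * B.card) + d * (T.card * B.card) :=
        Nat.add_le_add_left (Nat.mul_le_mul_left _ h4) _
  have hfin : ∑ x ∈ s, rep A (-B) x * rep A (-B) x
      ≤ T.card * B.card * (B.card - (m + 1)) + (m + 1 - 1) * A.card * B.card
        + A.card * B.card := by
    have h1' : B.card - (m + 1) = d := by omega
    rw [h1', Nat.add_sub_cancel]
    calc ∑ x ∈ s, rep A (-B) x * rep A (-B) x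
        ≤ (m + 1) * (A.card * B.card) + d * (T.card * B.card) := hE
    _ = T.card * B.card * d + m * A.card * B.card + A.card * B.card := by ring
  omega
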